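/- For all n ≤ k ≤ 2n, the ratio binom(2n, k) / binom(2n, n) is at most exp(-(2/n) * binom(2n-k, 2)). Equivalently, for k ≤ n, binom(2n,k)/binom(2n,n) ≤ exp(-(2/n)*binom(n-k,2)). -/

import Mathlib

open Real

lemma mono_key : MonotoneOn (fun t : ℝ => (1 + t) * Real.exp (-(2 * t)) + t) (Set.Ici 0) := by
  apply monotoneOn_of_deriv_nonneg (convex_Ici 0)
  · fun_prop
  · fun_prop
  · intro x hx
    have h1 : HasDerivAt (fun t : ℝ => Real.exp (-(2 * t))) (Real.exp (-(2 * x)) * (-2)) x := by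
      have h0 : HasDerivAt (fun t : ℝ => -(2 * t)) (-2) x := by
        have h := ((hasDerivAt_id x).const_mul (2:ℝ)).neg
        simp only [mul_one] at h
        exact h
      exact (Real.hasDerivAt_exp (-(2*x))).comp x h0
    have h2 : HasDerivAt (fun t : ℝ => (1 + t) * Real.exp (-(2 * t)) + t)
        (1 * Real.exp (-(2 * x)) + (1 + x) * (Real.exp (-(2 * x)) * (-2)) + 1) x := by
      exact (((hasDerivAt_id x).const_add 1).mul h1).add (hasDerivAt_id x)
    rw [h2.deriv]
    have he : 1 + 2 * x ≤ Real.exp (2 * x) := by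
      have := Real.add_one_le_exp (2 * x); linarith
    have hmul : Real.exp (-(2 * x)) * Real.exp (2 * x) = 1 := by
      rw [← Real.exp_add]; simp
    nlinarith [Real.exp_pos (-(2*x))]

lemma key (t : ℝ) (ht : 0 ≤ t) : (1 - t) ≤ (1 + t) * Real.exp (-(2 * t)) := by
  have := mono_key (Set.self_mem_Ici) (Set.mem_Ici.mpr ht) ht
  simp only [mul_zero, neg_zero, Real.exp_zero, mul_one, add_zero] at this
  linarith

lemma aux (n : ℕ) : ∀ d : ℕ, d ≤ n → ((2*n).choose (n-d) : ℝ) / ((2*n).choose n : ℝ) ≤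
    Real.exp (-(2/(n:ℝ)) * (d.choose 2 : ℝ)) := by
  intro d
  induction d with
  | zero =>
    intro _
    simp only [Nat.sub_zero, Nat.choose_zero_right, Nat.cast_zero, mul_zero, Real.exp_zero]
    have hz : (Nat.choose 0 2 : ℝ) = 0 := by norm_num
    rw [hz, mul_zero, Real.exp_zero]
    rcases Nat.eq_zero_or_pos n with h | h
    · simp [h]
    · have : 0 < (2*n).choose n := Nat.choose_pos (by omega)
      rw [div_self (by positivity)]
  | succ d ih =>
    intro hd
    have hd' : d ≤ n := by omega
    have hn : 0 < n := by omega
    have hC : (0:ℝ) < ((2*n).choose n : ℝ) := by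
      exact_mod_cast Nat.choose_pos (by omega : n ≤ 2*n)
    -- nat identity
    have hid : (2*n).choose (n-d) * (n-d) = (2*n).choose (n-(d+1)) * (n+d+1) := by
      have := Nat.choose_succ_right_eq (2*n) (n-d-1)
      have h1 : n - d - 1 + 1 = n - d := by omega
      have h2 : 2*n - (n-d-1) = n+d+1 := by omega
      rw [h1, h2] at this
      have h3 : n - (d+1) = n - d - 1 := by omega
      rw [h3]
      convert this using 2
    have hidR : ((2*n).choose (n-d) : ℝ) * ((n:ℝ) - d) =
        ((2*n).choose (n-(d+1)) : ℝ) * ((n:ℝ) + d + 1) := by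
      have := congrArg (fun m : ℕ => (m : ℝ)) hid
      push_cast [Nat.cast_sub hd'] at this
      linarith
    have hA : ((2*n).choose (n-(d+1)) : ℝ) =
        ((2*n).choose (n-d) : ℝ) * (((n:ℝ) - d) / ((n:ℝ) + d + 1)) := by
      have hpos : (0:ℝ) < (n:ℝ) + d + 1 := by positivity
      field_simp
      linarith
    -- factor bound
    have hfac : ((n:ℝ) - d) / ((n:ℝ) + d + 1) ≤ Real.exp (-(2/(n:ℝ)) * d) := by
      have hk := key ((d:ℝ)/(n:ℝ)) (by positivity)
      have hnn : (0:ℝ) < n := by exact_mod_cast hn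
      have hE : Real.exp (-(2 * ((d:ℝ)/(n:ℝ)))) = Real.exp (-(2/(n:ℝ)) * d) := by
        congr 1; field_simp
      rw [hE] at hk
      have hEpos : (0:ℝ) < Real.exp (-(2/(n:ℝ)) * d) := Real.exp_pos _
      rw [div_le_iff₀ (by positivity)]
      have hdn : (d:ℝ)/(n:ℝ) * (n:ℝ) = d := div_mul_cancel₀ _ (ne_of_gt hnn)
      nlinarith [mul_le_mul_of_nonneg_right hk hnn.le, hdn, hEpos]
    have hfacnn : (0:ℝ) ≤ ((n:ℝ) - d) / ((n:ℝ) + d + 1) := by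
      apply div_nonneg _ (by positivity)
      have : (d:ℝ) ≤ (n:ℝ) := by exact_mod_cast hd'
      linarith
    have hch : ((d+1).choose 2 : ℝ) = (d.choose 2 : ℝ) + d := by
      have : (d+1).choose 2 = d.choose 2 + d := by
        rw [Nat.choose_succ_succ]
        simp [Nat.choose_one_right, Nat.add_comm]
      exact_mod_cast this
    rw [hA]
    calc ((2*n).choose (n-d) : ℝ) * (((n:ℝ) - d) / ((n:ℝ) + d + 1)) / ((2*n).choose n : ℝ)
        = (((2*n).choose (n-d) : ℝ) / ((2*n).choose n : ℝ)) * (((n:ℝ) - d) / ((n:ℝ) + d + 1)) := by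
          ring
      _ ≤ Real.exp (-(2/(n:ℝ)) * (d.choose 2 : ℝ)) * Real.exp (-(2/(n:ℝ)) * d) := by
          apply mul_le_mul (ih hd') hfac hfacnn (le_of_lt (Real.exp_pos _))
      _ = Real.exp (-(2/(n:ℝ)) * ((d+1).choose 2 : ℝ)) := by
          rw [← Real.exp_add, hch]; ring_nf

theorem binom_ratio_bound (n k : ℕ) (hk : k ≤ n) :
    ((2 * n).choose k : ℝ) / ((2 * n).choose n : ℝ) ≤
      Real.exp (-(2 / (n : ℝ)) * ((n - k).choose 2 : ℝ)) := by
  have := aux n (n - k) (Nat.sub_le n k)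
  rwa [Nat.sub_sub_self hk] at this
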